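/- Positive solution of a nonnegative linear system forces subunit spectral radius: let B be an N×N real matrix with nonnegative entries and b ∈ ℝ^N with b_i > 0 for all i. If there exists x ∈ ℝ^N with x_i > 0 for all i such that x = Bx + b, then every eigenvalue λ ∈ ℂ of B satisfies |λ| < 1. -/

import Mathlib

open Matrix Finset

/-- Positive solution of a nonnegative linear system forces
subunit spectral radius. -/
theorem positive_solution_subunit_spectral_radius
    (N : ℕ) (hN : 0 < N) (B : Matrix (Fin N) (Fin N) ℝ)
    (hB : ∀ i j, 0 ≤ B i j)
    (b : Fin N → ℝ) (hb : ∀ i, 0 < b i)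
    (x : Fin N → ℝ) (hx : ∀ i, 0 < x i)
    (hsol : x = B.mulVec x + b)
    (lam : ℂ) (hlam : ((B.map (Complex.ofReal)).charpoly).IsRoot lam) :
    ‖lam‖ < 1 := by
  set B' : Matrix (Fin N) (Fin N) ℂ := B.map Complex.ofReal with hB'
  have : Nonempty (Fin N) := ⟨⟨0, hN⟩⟩
  -- charpoly root gives a singular matrix
  have hdet : (Matrix.scalar (Fin N) lam - B').det = 0 := by
    have h1 : Polynomial.eval lam B'.charpoly
        = (Matrix.scalar (Fin N) lam - B').det := by
      rw [Matrix.charpoly, _root_.eval_det, Matrix.matPolyEquiv_charmatrix]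
      simp
    rw [← h1]; exact hlam
  obtain ⟨v, hv0, hv⟩ := (Matrix.exists_mulVec_eq_zero_iff).2 hdet
  have hveq : ∀ i, lam * v i = ∑ j, (B i j : ℂ) * v j := by
    intro i
    rw [Matrix.sub_mulVec, sub_eq_zero] at hv
    have h2 : (Matrix.scalar (Fin N) lam).mulVec v = lam • v := by
      ext k
      simp [Matrix.scalar, Matrix.mulVec_diagonal, Pi.algebraMap_apply]
    rw [h2] at hv
    have h3 := congrFun hv i
    simp only [Pi.smul_apply, smul_eq_mul] at h3
    rw [h3]
    simp [hB', Matrix.mulVec, dotProduct, Matrix.map_apply]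
  -- choose index maximizing |v i| / x i
  obtain ⟨i0, -, hi0⟩ := Finset.exists_max_image Finset.univ
    (fun i => ‖v i‖ / x i) ⟨⟨0, hN⟩, Finset.mem_univ _⟩
  set c : ℝ := ‖v i0‖ / x i0 with hc
  have hvle : ∀ j, ‖v j‖ ≤ c * x j := fun j =>
    (div_le_iff₀ (hx j)).mp (hi0 j (Finset.mem_univ j))
  -- c > 0
  have hc0 : 0 < c := by
    obtain ⟨k, hk⟩ := Function.ne_iff.mp hv0
    have h1 : 0 < ‖v k‖ / x k :=
      div_pos (by simpa using hk) (hx k)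
    exact lt_of_lt_of_le h1 (hi0 k (Finset.mem_univ k))
  have hvi0 : ‖v i0‖ = c * x i0 := by
    rw [hc, div_mul_cancel₀ _ (hx i0).ne']
  -- key inequality
  have key : ‖lam‖ * (c * x i0) < c * x i0 := by
    have h1 : ‖lam‖ * (c * x i0) = ‖lam * v i0‖ := by
      rw [norm_mul, hvi0]
    have h2 : ‖lam * v i0‖ ≤ ∑ j, B i0 j * ‖v j‖ := by
      rw [hveq i0]
      refine le_trans (norm_sum_le _ _) (le_of_eq ?_)
      refine Finset.sum_congr rfl fun j _ => ?_
      rw [norm_mul, Complex.norm_real, Real.norm_of_nonneg (hB i0 j)]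
    have h3 : ∑ j, B i0 j * ‖v j‖ ≤ ∑ j, B i0 j * (c * x j) :=
      Finset.sum_le_sum fun j _ => mul_le_mul_of_nonneg_left (hvle j) (hB i0 j)
    have h4 : ∑ j, B i0 j * (c * x j) = c * (B.mulVec x) i0 := by
      rw [Matrix.mulVec, dotProduct, Finset.mul_sum]
      exact Finset.sum_congr rfl fun j _ => by ring
    have h5 : (B.mulVec x) i0 = x i0 - b i0 := by
      have := congrFun hsol i0
      simp only [Pi.add_apply] at this
      linarith
    have h6 : c * (B.mulVec x) i0 < c * x i0 := by
      rw [h5]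
      have := hb i0
      nlinarith
    calc ‖lam‖ * (c * x i0) = ‖lam * v i0‖ := h1
      _ ≤ ∑ j, B i0 j * ‖v j‖ := h2
      _ ≤ ∑ j, B i0 j * (c * x j) := h3
      _ = c * (B.mulVec x) i0 := h4
      _ < c * x i0 := h6
  exact (mul_lt_iff_lt_one_left (mul_pos hc0 (hx i0))).mp key
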